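/- Fix δ ∈ (0,1) and 0 < L ≤ U with θ = U/L, and let n = max{1, ⌈1/δ⌉ − 1}. Let r be the unique positive solution of (r−1)·(1 + r/n)^n = θ − 1. Then every random threshold algorithm μ for one-max search satisfies α_δ^μ ≥ r; that is, the optimal δ-CVaR competitive ratio satisfies α_δ^{θ,*} ≥ r. In particular, α_δ^{θ,*} ≥ √θ whenever δ ≥ 1/2. -/

import Mathlib

set_option linter.unusedSectionVars false
set_option linter.unusedVariables false
set_option maxHeartbeats 1000000


open MeasureTheory Set

/-- Reward conditional value-at-risk of `f` under measure `μ` at level `δ ∈ [0,1)`: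
`CVaR_δ[Y] = sup_t { t - (1-δ)⁻¹ E[max(t - Y, 0)] }`. -/
noncomputable def rcvar (δ : ℝ) (μ : Measure ℝ) (f : ℝ → ℝ) : ℝ :=
  ⨆ t : ℝ, t - (1 - δ)⁻¹ * ∫ x, max (t - f x) 0 ∂μ

/-- One-max search profit of a random threshold `x` when the maximum price is `v`
and the lower price bound is `L`. -/
noncomputable def omsProfit (L v x : ℝ) : ℝ := if x ≤ v then x else L

/-- `δ`-CVaR competitive ratio of the random-threshold strategy `μ` at maximal price `v`. -/
noncomputable def omsRatio (δ L : ℝ) (μ : Measure ℝ) (v : ℝ) : ℝ :=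
  v / rcvar δ μ (fun x => omsProfit L v x)

/-- `δ`-CVaR competitive ratio of the random-threshold strategy `μ` for one-max search
with price bounds `L ≤ U`. -/
noncomputable def omsCR (δ L U : ℝ) (μ : Measure ℝ) : ℝ :=
  ⨆ v : Icc L U, omsRatio δ L μ (v : ℝ)

/-- CDF of the law `μ`. -/
noncomputable def cdfR (μ : Measure ℝ) (x : ℝ) : ℝ := (μ (Iic x)).toReal

/-- Inverse CDF of a law `μ` supported in `[a,b]`: `F⁻¹(p) = inf {x ∈ [a,b] : F(x) ≥ p}`. -/
noncomputable def invCdf (a b : ℝ) (μ : Measure ℝ) (p : ℝ) : ℝ :=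
  sInf {x | x ∈ Icc a b ∧ p ≤ cdfR μ x}

/-- Optimal `δ`-CVaR competitive ratio for one-max search over all random-threshold
strategies supported in `[L,U]`. -/
noncomputable def omsOpt (δ L U : ℝ) : ℝ :=
  ⨅ μ : {m : Measure ℝ // IsProbabilityMeasure m ∧ m (Icc L U)ᶜ = 0},
    omsCR δ L U (μ : Measure ℝ)

noncomputable def Gint (μ : Measure ℝ) (p : ℝ) : ℝ := ∫ x in Iic p, x ∂μ

section helpers
variable {μ : Measure ℝ} [IsProbabilityMeasure μ]

lemma integ_of_bound {g : ℝ → ℝ} (hg : AEStronglyMeasurable g μ) (C : ℝ)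
    (hC : ∀ᵐ x ∂μ, ‖g x‖ ≤ C) : Integrable g μ :=
  Integrable.mono' (integrable_const C) hg hC

variable {L U : ℝ}

lemma ae_mem (hsupp : μ (Icc L U)ᶜ = 0) : ∀ᵐ x ∂μ, L ≤ x ∧ x ≤ U := by
  have : ∀ᵐ x ∂μ, x ∈ Icc L U := by
    rw [ae_iff]
    have : {x | ¬ x ∈ Icc L U} = (Icc L U)ᶜ := rfl
    rw [this, hsupp]
  filter_upwards [this] with x hx using hx

lemma cdfR_mono {p q : ℝ} (h : p ≤ q) : cdfR μ p ≤ cdfR μ q := by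
  unfold cdfR
  exact ENNReal.toReal_mono (measure_ne_top _ _) (measure_mono (Iic_subset_Iic.2 h))

lemma cdfR_nonneg (p : ℝ) : 0 ≤ cdfR μ p := ENNReal.toReal_nonneg

lemma cdfR_le_one (p : ℝ) : cdfR μ p ≤ 1 := by
  unfold cdfR
  rw [show (1:ℝ) = (μ univ).toReal by simp]
  exact ENNReal.toReal_mono (measure_ne_top _ _) (measure_mono (subset_univ _))

lemma meas_Ioi (v : ℝ) : (μ (Ioi v)).toReal = 1 - cdfR μ v := by
  have h := measure_add_measure_compl (μ := μ) (measurableSet_Iic (a := v))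
  rw [compl_Iic] at h
  have h2 : (μ (Iic v)).toReal + (μ (Ioi v)).toReal = 1 := by
    rw [← ENNReal.toReal_add (measure_ne_top _ _) (measure_ne_top _ _), h]; simp
  unfold cdfR; linarith

lemma meas_Ioc {p q : ℝ} (h : p ≤ q) : (μ (Ioc p q)).toReal = cdfR μ q - cdfR μ p := by
  have h1 : μ (Iic p) + μ (Ioc p q) = μ (Iic q) := by
    rw [← measure_union (Iic_disjoint_Ioc le_rfl) measurableSet_Ioc, Iic_union_Ioc_eq_Iic h]
  have h2 : (μ (Iic p)).toReal + (μ (Ioc p q)).toReal = (μ (Iic q)).toReal := by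
    rw [← ENNReal.toReal_add (measure_ne_top _ _) (measure_ne_top _ _), h1]
  unfold cdfR; linarith

lemma integrable_id' (hL : 0 < L) (hsupp : μ (Icc L U)ᶜ = 0) :
    Integrable (fun x : ℝ => x) μ := by
  refine integ_of_bound aemeasurable_id.aestronglyMeasurable U ?_
  filter_upwards [ae_mem hsupp] with x hx
  rw [Real.norm_eq_abs, abs_le]
  constructor <;> nlinarith [hx.1, hx.2]

lemma Gint_le (hL : 0 < L) (hsupp : μ (Icc L U)ᶜ = 0) (p : ℝ) :
    Gint μ p ≤ p * cdfR μ p := by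
  unfold Gint
  have h1 : ∫ x in Iic p, x ∂μ ≤ ∫ _x in Iic p, p ∂μ := by
    refine setIntegral_mono_on ((integrable_id' hL hsupp).integrableOn)
      (integrableOn_const (measure_ne_top _ _)) measurableSet_Iic ?_
    exact fun x hx => hx
  rw [setIntegral_const] at h1
  unfold cdfR
  rw [smul_eq_mul, measureReal_def] at h1
  linarith [h1]

lemma Gint_diff (hL : 0 < L) (hsupp : μ (Icc L U)ᶜ = 0) {p q : ℝ} (h : p ≤ q) :
    Gint μ q = Gint μ p + ∫ x in Ioc p q, x ∂μ := by
  unfold Gint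
  rw [← setIntegral_union (Iic_disjoint_Ioc le_rfl) measurableSet_Ioc
    ((integrable_id' hL hsupp).integrableOn) ((integrable_id' hL hsupp).integrableOn),
    Iic_union_Ioc_eq_Iic h]

lemma Gint_diff_le (hL : 0 < L) (hsupp : μ (Icc L U)ᶜ = 0) {p q : ℝ} (h : p ≤ q) :
    Gint μ q - Gint μ p ≤ q * (cdfR μ q - cdfR μ p) := by
  rw [Gint_diff hL hsupp h, ← meas_Ioc h]
  have h1 : ∫ x in Ioc p q, x ∂μ ≤ ∫ _x in Ioc p q, q ∂μ := by
    refine setIntegral_mono_on ((integrable_id' hL hsupp).integrableOn)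
      (integrableOn_const (measure_ne_top _ _)) measurableSet_Ioc ?_
    exact fun x hx => hx.2
  rw [setIntegral_const, smul_eq_mul, measureReal_def] at h1
  linarith

end helpers

section core
variable {μ : Measure ℝ} [IsProbabilityMeasure μ] {δ L U : ℝ}

lemma omsProfit_meas (L v : ℝ) : Measurable (omsProfit L v) := by
  unfold omsProfit
  exact Measurable.ite (measurableSet_le measurable_id measurable_const)
    measurable_id measurable_const

lemma omsProfit_le {v x : ℝ} (hLv : L ≤ v) : omsProfit L v x ≤ v := by
  unfold omsProfit; split <;> simp_all

lemma omsProfit_ae_bounds (hL : 0 < L) (hsupp : μ (Icc L U)ᶜ = 0)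
    {v : ℝ} (hLv : L ≤ v) (hvU : v ≤ U) :
    ∀ᵐ x ∂μ, L ≤ omsProfit L v x ∧ omsProfit L v x ≤ v := by
  have hmem : ∀ᵐ x ∂μ, x ∈ Icc L U := by
    rw [ae_iff]
    have : {x | ¬ x ∈ Icc L U} = (Icc L U)ᶜ := rfl
    rw [this, hsupp]
  filter_upwards [hmem] with x hx
  unfold omsProfit
  rcases hx with ⟨h1, h2⟩
  split <;> constructor <;> linarith

/-- Key dual lemma: for any density `ρ` with `0 ≤ ρ ≤ (1-δ)⁻¹` and `∫ρ = 1`,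
`rcvar ≤ ∫ ρ Y`. -/
lemma rcvar_le_rho (hδ0 : 0 < δ) (hδ1 : δ < 1) (hL : 0 < L) (hsupp : μ (Icc L U)ᶜ = 0)
    {v : ℝ} (hLv : L ≤ v) (hvU : v ≤ U) (ρ : ℝ → ℝ) (hm : Measurable ρ)
    (h0 : ∀ x, 0 ≤ ρ x) (hc : ∀ x, ρ x ≤ (1 - δ)⁻¹)
    (h1 : ∫ x, ρ x ∂μ = 1) :
    rcvar δ μ (omsProfit L v) ≤ ∫ x, ρ x * omsProfit L v x ∂μ := by
  set c : ℝ := (1 - δ)⁻¹ with hc_def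
  have h1δ : (0:ℝ) < 1 - δ := by linarith
  have hcpos : 0 < c := by positivity
  set Y : ℝ → ℝ := omsProfit L v with hY
  have hYb := omsProfit_ae_bounds hL hsupp hLv hvU (μ := μ)
  have hYm : Measurable Y := omsProfit_meas L v
  refine ciSup_le fun t => ?_
  set B : ℝ := |t| + v + L with hBdef
  -- integrability facts
  have hYint : Integrable Y μ := by
    refine Integrable.mono' (integrable_const v) hYm.aestronglyMeasurable ?_
    filter_upwards [hYb] with x hx
    rw [Real.norm_eq_abs, abs_le]; exact ⟨by linarith [hx.1], hx.2⟩
  have hAm : Measurable fun x => max (t - Y x) 0 :=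
    (measurable_const.sub hYm).max measurable_const
  have habs : ∀ᵐ x ∂μ, |max (t - Y x) 0| ≤ B := by
    filter_upwards [hYb] with x hx
    rw [abs_le]
    constructor
    · have := le_max_right (t - Y x) 0; nlinarith [abs_nonneg t, hx.1]
    · rcases le_or_gt (t - Y x) 0 with h | h
      · rw [max_eq_right h]; nlinarith [abs_nonneg t, hx.1]
      · rw [max_eq_left h.le]
        have := le_abs_self t
        nlinarith [hx.1]
  have hAint : Integrable (fun x => max (t - Y x) 0) μ := by
    refine Integrable.mono' (integrable_const B) hAm.aestronglyMeasurable ?_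
    filter_upwards [habs] with x hx
    rwa [Real.norm_eq_abs]
  have hρint : Integrable ρ μ := by
    refine Integrable.mono' (integrable_const c) hm.aestronglyMeasurable ?_
    filter_upwards with x
    rw [Real.norm_eq_abs, abs_le]; exact ⟨by linarith [h0 x, hcpos.le], hc x⟩
  have hρAint : Integrable (fun x => ρ x * max (t - Y x) 0) μ := by
    refine Integrable.mono' (integrable_const (c * B)) (hm.mul hAm).aestronglyMeasurable ?_
    filter_upwards [habs] with x hx
    rw [Real.norm_eq_abs, abs_mul, abs_of_nonneg (h0 x)]
    have h2 : 0 ≤ B := le_trans (abs_nonneg _) hx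
    exact mul_le_mul (hc x) hx (abs_nonneg _) hcpos.le
  have hρYint : Integrable (fun x => ρ x * Y x) μ := by
    refine Integrable.mono' (integrable_const (c * v)) (hm.mul hYm).aestronglyMeasurable ?_
    filter_upwards [hYb] with x hx
    rw [Real.norm_eq_abs, abs_mul, abs_of_nonneg (h0 x)]
    have h2 : |Y x| ≤ v := by rw [abs_le]; exact ⟨by linarith [hx.1], hx.2⟩
    exact mul_le_mul (hc x) h2 (abs_nonneg _) hcpos.le
  -- chain of inequalities
  have step1 : ∫ x, ρ x * max (t - Y x) 0 ∂μ ≤ c * ∫ x, max (t - Y x) 0 ∂μ := by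
    rw [← integral_const_mul]
    refine integral_mono_ae hρAint (hAint.const_mul c) ?_
    filter_upwards with x
    exact mul_le_mul_of_nonneg_right (hc x) (le_max_right _ _)
  have step2 : ∫ x, ρ x * (t - Y x) ∂μ ≤ ∫ x, ρ x * max (t - Y x) 0 ∂μ := by
    refine integral_mono_ae ?_ hρAint ?_
    · have : (fun x => ρ x * (t - Y x)) = fun x => t * ρ x - ρ x * Y x := by
        funext x; ring
      rw [this]
      exact (hρint.const_mul t).sub hρYint
    · filter_upwards with x
      exact mul_le_mul_of_nonneg_left (le_max_left _ _) (h0 x)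
  have step3 : ∫ x, ρ x * (t - Y x) ∂μ = t - ∫ x, ρ x * Y x ∂μ := by
    have : (fun x => ρ x * (t - Y x)) = fun x => t * ρ x - ρ x * Y x := by
      funext x; ring
    rw [this, integral_sub (hρint.const_mul t) hρYint, integral_const_mul, h1, mul_one]
  have : t - c * ∫ x, max (t - Y x) 0 ∂μ ≤ t - ∫ x, ρ x * (t - Y x) ∂μ := by
    nlinarith [step1, step2]
  rw [step3] at this
  linarith



/-- Main bound: three-band density gives an upper bound on rcvar. -/
lemma keybound (hδ0 : 0 < δ) (hδ1 : δ < 1) (hL : 0 < L) (hsupp : μ (Icc L U)ᶜ = 0)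
    {p q v a g β : ℝ} (hpq : p ≤ q) (hqv : q ≤ v) (hLv : L ≤ v) (hvU : v ≤ U)
    (ha0 : 0 ≤ a) (hac : a ≤ (1 - δ)⁻¹) (hg0 : 0 ≤ g) (hgc : g ≤ (1 - δ)⁻¹)
    (hb0 : 0 ≤ β) (hbc : β ≤ (1 - δ)⁻¹)
    (hsum : a * cdfR μ p + g * (cdfR μ q - cdfR μ p) + β * (1 - cdfR μ v) = 1) :
    rcvar δ μ (omsProfit L v) ≤
      a * Gint μ p + g * (Gint μ q - Gint μ p) + β * L * (1 - cdfR μ v) := by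
  classical
  set c : ℝ := (1 - δ)⁻¹ with hcdef
  set ρ : ℝ → ℝ := fun x => if x ≤ p then a else if x ≤ q then g else if v < x then β else 0
    with hρdef
  have hm : Measurable ρ := by
    refine Measurable.ite (measurableSet_le measurable_id measurable_const) measurable_const ?_
    refine Measurable.ite (measurableSet_le measurable_id measurable_const) measurable_const ?_
    exact Measurable.ite (measurableSet_lt measurable_const measurable_id) measurable_const
      measurable_const
  have h0 : ∀ x, 0 ≤ ρ x := by
    intro x; simp only [hρdef]; split_ifs <;> first | exact ha0 | exact hg0 | exact hb0 | exact le_refl 0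
  have hcb : ∀ x, ρ x ≤ c := by
    have hcpos : (0:ℝ) < c := by
      have : (0:ℝ) < 1 - δ := by linarith
      positivity
    intro x; simp only [hρdef]; split_ifs <;> first | exact hac | exact hgc | exact hbc | exact hcpos.le
  have hρeq : ρ = fun x => (Iic p).indicator (fun _ => a) x + (Ioc p q).indicator (fun _ => g) x
      + (Ioi v).indicator (fun _ => β) x := by
    funext x
    simp only [hρdef, indicator_apply, mem_Iic, mem_Ioc, mem_Ioi]
    by_cases h1 : x ≤ p
    · have h2 : ¬(p < x ∧ x ≤ q) := fun hh => absurd h1 (not_le.2 hh.1)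
      have h3 : ¬ v < x := not_lt.2 (h1.trans (hpq.trans hqv))
      simp [h1, h2, h3]
    · by_cases h2 : x ≤ q
      · have h3 : ¬ v < x := not_lt.2 (h2.trans hqv)
        have h2' : p < x ∧ x ≤ q := ⟨not_le.1 h1, h2⟩
        simp [h1, h2, h2', h3]
      · have h2' : ¬(p < x ∧ x ≤ q) := fun hh => absurd hh.2 h2
        by_cases h3 : v < x
        · simp [h1, h2, h2', h3]
        · simp [h1, h2, h2', h3]
  have hid : Integrable (fun x : ℝ => x) μ := integrable_id' hL hsupp
  have hint1 : Integrable ((Iic p).indicator (fun _ => a)) μ :=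
    (integrable_const a).indicator measurableSet_Iic
  have hint2 : Integrable ((Ioc p q).indicator (fun _ => g)) μ :=
    (integrable_const g).indicator measurableSet_Ioc
  have hint3 : Integrable ((Ioi v).indicator (fun _ => β)) μ :=
    (integrable_const β).indicator measurableSet_Ioi
  have h1 : ∫ x, ρ x ∂μ = 1 := by
    rw [hρeq]
    have e1 := integral_add (μ := μ) (hint1.add hint2) hint3
    have e2 := integral_add (μ := μ) hint1 hint2
    simp only [Pi.add_apply] at e1 e2
    rw [e1, e2,
      integral_indicator measurableSet_Iic, integral_indicator measurableSet_Ioc,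
      integral_indicator measurableSet_Ioi, setIntegral_const, setIntegral_const,
      setIntegral_const, smul_eq_mul, smul_eq_mul, smul_eq_mul,
      measureReal_def, measureReal_def, measureReal_def, meas_Ioc hpq, meas_Ioi]
    have : (μ (Iic p)).toReal = cdfR μ p := rfl
    rw [this] at *
    linarith [hsum]
  have hYeq : (fun x => ρ x * omsProfit L v x) = fun x =>
      (Iic p).indicator (fun y => a * y) x + (Ioc p q).indicator (fun y => g * y) x
      + (Ioi v).indicator (fun _ => β * L) x := by
    funext x
    simp only [hρdef, indicator_apply, mem_Iic, mem_Ioc, mem_Ioi, omsProfit]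
    by_cases h1 : x ≤ p
    · have h2 : ¬(p < x ∧ x ≤ q) := fun hh => absurd h1 (not_le.2 hh.1)
      have h3 : ¬ v < x := not_lt.2 (h1.trans (hpq.trans hqv))
      have h4 : x ≤ v := h1.trans (hpq.trans hqv)
      simp [h1, h2, h3, h4]
    · by_cases h2 : x ≤ q
      · have h3 : ¬ v < x := not_lt.2 (h2.trans hqv)
        have h2' : p < x ∧ x ≤ q := ⟨not_le.1 h1, h2⟩
        have h4 : x ≤ v := h2.trans hqv
        simp [h1, h2, h2', h3, h4]
      · have h2' : ¬(p < x ∧ x ≤ q) := fun hh => absurd hh.2 h2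
        by_cases h3 : v < x
        · have h4 : ¬ x ≤ v := not_le.2 h3
          simp [h1, h2, h2', h3, h4]
        · simp [h1, h2, h2', h3]
  have hint1' : Integrable ((Iic p).indicator (fun y => a * y)) μ :=
    (hid.const_mul a).indicator measurableSet_Iic
  have hint2' : Integrable ((Ioc p q).indicator (fun y => g * y)) μ :=
    (hid.const_mul g).indicator measurableSet_Ioc
  have hint3' : Integrable ((Ioi v).indicator (fun _ => β * L)) μ :=
    (integrable_const (β * L)).indicator measurableSet_Ioi
  have hIoc : ∫ x in Ioc p q, x ∂μ = Gint μ q - Gint μ p := by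
    have := Gint_diff hL hsupp hpq (μ := μ); linarith
  have hval : ∫ x, ρ x * omsProfit L v x ∂μ
      = a * Gint μ p + g * (Gint μ q - Gint μ p) + β * L * (1 - cdfR μ v) := by
    have e1 := integral_add (μ := μ) (hint1'.add hint2') hint3'
    have e2 := integral_add (μ := μ) hint1' hint2'
    simp only [Pi.add_apply] at e1 e2
    rw [hYeq, e1, e2,
      integral_indicator measurableSet_Iic, integral_indicator measurableSet_Ioc,
      integral_indicator measurableSet_Ioi, setIntegral_const, smul_eq_mul, measureReal_def, meas_Ioi,
      integral_const_mul, integral_const_mul, hIoc]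
    have : ∫ x in Iic p, x ∂μ = Gint μ p := rfl
    rw [this]; ring
  rw [← hval]
  exact rcvar_le_rho hδ0 hδ1 hL hsupp hLv hvU ρ hm h0 hcb h1

lemma rcvar_term_le (hδ0 : 0 < δ) (hδ1 : δ < 1) (hL : 0 < L) (hsupp : μ (Icc L U)ᶜ = 0)
    {v : ℝ} (hLv : L ≤ v) (hvU : v ≤ U) (t : ℝ) :
    t - (1 - δ)⁻¹ * ∫ x, max (t - omsProfit L v x) 0 ∂μ ≤ v := by
  have h1δ : (0:ℝ) < 1 - δ := by linarith
  have hcpos : (0:ℝ) < (1 - δ)⁻¹ := by positivity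
  have hc1 : (1:ℝ) ≤ (1 - δ)⁻¹ := by
    rw [le_inv_comm₀ one_pos h1δ]; linarith
  set Y : ℝ → ℝ := omsProfit L v with hY
  have hYm : Measurable Y := omsProfit_meas L v
  have hnn : 0 ≤ ∫ x, max (t - Y x) 0 ∂μ := integral_nonneg fun x => le_max_right _ _
  rcases le_or_gt t v with h | h
  · nlinarith
  · have hYb := omsProfit_ae_bounds hL hsupp hLv hvU (μ := μ)
    have hAm : Measurable fun x => max (t - Y x) 0 :=
      (measurable_const.sub hYm).max measurable_const
    have hAint : Integrable (fun x => max (t - Y x) 0) μ := by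
      refine Integrable.mono' (integrable_const (|t| + v + L)) hAm.aestronglyMeasurable ?_
      filter_upwards [hYb] with x hx
      rw [Real.norm_eq_abs, abs_le]
      constructor
      · have := le_max_right (t - Y x) 0; nlinarith [abs_nonneg t, hx.1]
      · rcases le_or_gt (t - Y x) 0 with hh | hh
        · rw [max_eq_right hh]; nlinarith [abs_nonneg t, hx.1]
        · rw [max_eq_left hh.le]
          have := le_abs_self t
          nlinarith [hx.1]
    have hmono : ∫ x, (t - v) ∂μ ≤ ∫ x, max (t - Y x) 0 ∂μ := by
      refine integral_mono (integrable_const _) hAint fun x => ?_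
      have := omsProfit_le (L := L) (v := v) (x := x) hLv
      exact le_trans (by linarith) (le_max_left _ _)
    rw [integral_const] at hmono
    simp only [probReal_univ, one_smul] at hmono
    nlinarith

lemma rcvar_le_v (hδ0 : 0 < δ) (hδ1 : δ < 1) (hL : 0 < L) (hsupp : μ (Icc L U)ᶜ = 0)
    {v : ℝ} (hLv : L ≤ v) (hvU : v ≤ U) :
    rcvar δ μ (omsProfit L v) ≤ v :=
  ciSup_le fun t => rcvar_term_le hδ0 hδ1 hL hsupp hLv hvU t

lemma rcvar_ge_L (hδ0 : 0 < δ) (hδ1 : δ < 1) (hL : 0 < L) (hsupp : μ (Icc L U)ᶜ = 0)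
    {v : ℝ} (hLv : L ≤ v) (hvU : v ≤ U) :
    L ≤ rcvar δ μ (omsProfit L v) := by
  have hbdd : BddAbove (range fun t => t - (1 - δ)⁻¹ * ∫ x, max (t - omsProfit L v x) 0 ∂μ) := by
    refine ⟨v, ?_⟩
    rintro y ⟨t, rfl⟩
    exact rcvar_term_le hδ0 hδ1 hL hsupp hLv hvU t
  have hval : L - (1 - δ)⁻¹ * ∫ x, max (L - omsProfit L v x) 0 ∂μ = L := by
    have hz : ∫ x, max (L - omsProfit L v x) 0 ∂μ = 0 := by
      have hYb := omsProfit_ae_bounds hL hsupp hLv hvU (μ := μ)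
      rw [← integral_zero ℝ ℝ (μ := μ)]
      refine integral_congr_ae ?_
      filter_upwards [hYb] with x hx
      have hle : L - omsProfit L v x ≤ 0 := by linarith [hx.1]
      simp [max_eq_right hle]
    rw [hz]; ring
  calc L = L - (1 - δ)⁻¹ * ∫ x, max (L - omsProfit L v x) 0 ∂μ := hval.symm
    _ ≤ rcvar δ μ (omsProfit L v) := le_ciSup hbdd L

/-- Main chain argument. -/
lemma main_bound (hδ0 : 0 < δ) (hδ1 : δ < 1) (hL : 0 < L) (hLU : L ≤ U)
    (hsupp : μ (Icc L U)ᶜ = 0) {α ε : ℝ} {n : ℕ} (hn1 : 1 ≤ n)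
    (hnδ : 1 ≤ ((n:ℝ) + 1) * δ) (hα : 1 ≤ α) (hε : 0 < ε)
    (hcon : ∀ v, L ≤ v → v ≤ U → v ≤ α * rcvar δ μ (omsProfit L v)) :
    U - L ≤ ((α - 1) * L + ε) * (1 + α / n) ^ n := by
  classical
  have hn0 : (0:ℝ) < n := by exact_mod_cast hn1
  have h1δ : (0:ℝ) < 1 - δ := by linarith
  set c : ℝ := (1 - δ)⁻¹ with hcdef
  have hcpos : 0 < c := by positivity
  have hc1δ : c * (1 - δ) = 1 := inv_mul_cancel₀ (ne_of_gt h1δ)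
  set l : ℝ := (1 - δ) / n with hldef
  have hlpos : 0 < l := by positivity
  have hlδ : l ≤ δ := by
    rw [hldef, div_le_iff₀ hn0]; nlinarith
  have hcl : c * l = 1 / n := by
    rw [hcdef, hldef]; field_simp
  set F : ℝ → ℝ := cdfR μ with hFdef
  set G : ℝ → ℝ := Gint μ with hGdef
  obtain ⟨J, hJ0, hJsucc⟩ : ∃ J : ℕ → ℝ, J 0 = L ∧
      ∀ j, J (j + 1) = J j + (α * J j + ε - L) / n :=
    ⟨fun j => Nat.rec (motive := fun _ => ℝ) L (fun _ x => x + (α * x + ε - L) / n) j,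
      rfl, fun j => rfl⟩
  obtain ⟨b, hbdef⟩ : ∃ b : ℕ → ℝ, ∀ j, b j = α * J j + ε := ⟨_, fun j => rfl⟩
  obtain ⟨Γ, hΓ0, hΓsucc⟩ : ∃ Γ : ℕ → ℝ, Γ 0 = δ * b 0 ∧
      ∀ j, Γ (j + 1) = Γ j + l * b (j + 1) :=
    ⟨fun j => Nat.rec (motive := fun _ => ℝ) (δ * b 0) (fun i x => x + l * b (i + 1)) j,
      rfl, fun j => rfl⟩
  obtain ⟨τ, hτdef⟩ : ∃ τ : ℕ → ℝ, ∀ j, τ j = δ + j * l := ⟨_, fun j => rfl⟩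
  have hτ0 : τ 0 = δ := by rw [hτdef]; simp
  have hτsucc : ∀ j, τ (j + 1) = τ j + l := by
    intro j; rw [hτdef, hτdef]; push_cast; ring
  have hτδ : ∀ j, δ ≤ τ j := by
    intro j; rw [hτdef]
    have : (0:ℝ) ≤ (j:ℝ) * l := by positivity
    linarith
  have hτn : τ n = 1 := by
    rw [hτdef, hldef]; field_simp; ring
  have hτmono : ∀ i j : ℕ, i ≤ j → τ i ≤ τ j := by
    intro i j hij; rw [hτdef, hτdef]
    have : (i:ℝ) ≤ (j:ℝ) := by exact_mod_cast hij
    nlinarith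
  have hJL : ∀ j, L ≤ J j := by
    intro j; induction j with
    | zero => exact le_of_eq hJ0.symm
    | succ j ih =>
      rw [hJsucc]
      have : 0 ≤ (α * J j + ε - L) / n := by
        apply div_nonneg _ hn0.le
        nlinarith
      linarith
  have hJmono : ∀ i j : ℕ, i ≤ j → J i ≤ J j := by
    have hstep : ∀ j, J j ≤ J (j + 1) := by
      intro j; rw [hJsucc]
      have : 0 ≤ (α * J j + ε - L) / n := by
        apply div_nonneg _ hn0.le
        nlinarith [hJL j]
      linarith
    intro i j hij
    exact monotone_nat_of_le_succ hstep hij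
  have hbL : ∀ j, L < b j := by
    intro j; rw [hbdef]
    nlinarith [hJL j]
  have hbmono : ∀ i j : ℕ, i ≤ j → b i ≤ b j := by
    intro i j hij; rw [hbdef, hbdef]
    nlinarith [hJmono i j hij]
  have hΓlow : ∀ j, τ j * b 0 ≤ Γ j := by
    intro j; induction j with
    | zero => rw [hτ0, hΓ0]
    | succ j ih =>
      rw [hτsucc, hΓsucc]
      have h1 : l * b 0 ≤ l * b (j+1) :=
        mul_le_mul_of_nonneg_left (hbmono 0 (j+1) (Nat.zero_le _)) hlpos.le
      nlinarith
  have hΓup : ∀ j, Γ j ≤ τ j * b j := by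
    intro j; induction j with
    | zero => rw [hτ0, hΓ0]
    | succ j ih =>
      rw [hτsucc, hΓsucc]
      have h1 : τ j * b j ≤ τ j * b (j+1) :=
        mul_le_mul_of_nonneg_left (hbmono j (j+1) (Nat.le_succ j))
          (le_trans hδ0.le (hτδ j))
      nlinarith
  have hΓgap : ∀ m j : ℕ, m ≤ j → Γ m + ((j:ℝ) - m) * l * b (m+1) ≤ Γ j := by
    intro m j hmj
    induction j, hmj using Nat.le_induction with
    | base => push_cast; simp
    | succ j hmj ih =>
      rw [hΓsucc]
      have hb1 : l * b (m+1) ≤ l * b (j+1) :=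
        mul_le_mul_of_nonneg_left (hbmono _ _ (by omega)) hlpos.le
      have hexp : ((j:ℝ) + 1 - (m:ℝ)) * l * b (m+1)
          = ((j:ℝ) - (m:ℝ)) * l * b (m+1) + l * b (m+1) := by ring
      push_cast
      linarith [ih, hb1, hexp]
  have hJid : ∀ j, J (j + 1) = c * (L * (1 - τ (j+1)) + Γ j - (δ - l) * b 0) := by
    intro j; induction j with
    | zero =>
      rw [hJsucc, hJ0, hΓ0, hτsucc, hτ0]
      have hb0 : b 0 = α * L + ε := by rw [hbdef, hJ0]
      have h2 : c * (L * (1 - (δ + l)) + δ * b 0 - (δ - l) * b 0)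
          = c * (1 - δ) * L - (c * l) * L + (c * l) * b 0 := by ring
      rw [h2, hc1δ, hcl, hb0]
      field_simp
      ring
    | succ j ih =>
      have hbexp : (α * J (j+1) + ε - L) / n = (c * l) * (b (j+1) - L) := by
        rw [hcl, hbdef]; ring
      rw [hJsucc (j+1), hbexp, ih, hΓsucc, hτsucc (j+1)]
      ring
  -- the forcing step
  have step : ∀ j v, j + 1 ≤ n →
      (∀ i, i ≤ j → τ i ≤ cdfR μ (b i) ∧
        Gint μ (b i) ≤ Γ i + (cdfR μ (b i) - τ i) * b i) →
      b j ≤ v → v ≤ U → cdfR μ v ≤ τ (j + 1) → v ≤ α * J (j + 1) := by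
    intro j v hjn hall hbv hvU huT
    set u := cdfR μ v with hudef
    have hLv : L ≤ v := le_trans (hbL j).le hbv
    have hFbj : τ j ≤ cdfR μ (b j) := (hall j le_rfl).1
    have huτ : τ j ≤ u := le_trans hFbj (cdfR_mono hbv)
    have hδu : δ ≤ u := le_trans (hτδ j) huτ
    have hTj : τ (j+1) - δ ≤ τ j := by
      rw [hτsucc]; linarith [hlδ]
    have hrc : rcvar δ μ (omsProfit L v) ≤ J (j + 1) := by
      have hPex : ∃ i, u - δ ≤ cdfR μ (b i) := ⟨j, by linarith⟩
      set m0 := Nat.find hPex with hm0def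
      have hm0 : u - δ ≤ cdfR μ (b m0) := Nat.find_spec hPex
      have hm0j : m0 ≤ j := Nat.find_min' hPex (by linarith)
      rcases Nat.eq_zero_or_eq_succ_pred m0 with h0 | hsuc
      · -- Case A : pivot band (-∞, b 0]
        rw [h0] at hm0
        have hFb0 : τ 0 ≤ cdfR μ (b 0) := (hall 0 (Nat.zero_le _)).1
        have hFb0pos : 0 < cdfR μ (b 0) := lt_of_lt_of_le hδ0 (hτ0 ▸ hFb0)
        set a := c * (u - δ) / cdfR μ (b 0) with hadef
        have ha0 : 0 ≤ a :=
          div_nonneg (mul_nonneg hcpos.le (by linarith)) hFb0pos.le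
        have haF : a * cdfR μ (b 0) = c * (u - δ) :=
          div_mul_cancel₀ _ (ne_of_gt hFb0pos)
        have hac : a ≤ c := by
          rw [hadef, div_le_iff₀ hFb0pos]
          have : u - δ ≤ cdfR μ (b 0) := hm0
          nlinarith
        have hsum : a * cdfR μ (b 0) + 0 * (cdfR μ (b 0) - cdfR μ (b 0))
            + c * (1 - u) = 1 := by
          rw [haF]; linear_combination hc1δ
        have hkey := keybound hδ0 hδ1 hL hsupp (le_refl (b 0))
          (le_trans (hbmono 0 j (Nat.zero_le _)) hbv) hLv hvU ha0 hac
          (le_refl 0) hcpos.le hcpos.le (le_refl c) hsum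
        have hG0 : Gint μ (b 0) ≤ b 0 * cdfR μ (b 0) := Gint_le hL hsupp (b 0)
        have haG : a * Gint μ (b 0) ≤ c * (u - δ) * b 0 := by
          calc a * Gint μ (b 0) ≤ a * (b 0 * cdfR μ (b 0)) := by
                rcases eq_or_lt_of_le ha0 with h | h
                · rw [← h]; simp
                · exact mul_le_mul_of_nonneg_left hG0 ha0
            _ = (a * cdfR μ (b 0)) * b 0 := by ring
            _ = c * (u - δ) * b 0 := by rw [haF]
        have h1 : rcvar δ μ (omsProfit L v) ≤ c * (u - δ) * b 0 + c * L * (1 - u) := by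
          calc rcvar δ μ (omsProfit L v)
              ≤ a * Gint μ (b 0) + 0 * (Gint μ (b 0) - Gint μ (b 0)) + c * L * (1 - u) := hkey
            _ ≤ c * (u - δ) * b 0 + c * L * (1 - u) := by linarith [haG]
        have h2 : c * (u - δ) * b 0 + c * L * (1 - u)
            ≤ c * (τ (j+1) - δ) * b 0 + c * L * (1 - τ (j+1)) := by
          have hprod : 0 ≤ (τ (j+1) - u) * (b 0 - L) :=
            mul_nonneg (by linarith) (by linarith [hbL 0])
          have hx : c * (τ (j+1) - δ) * b 0 + c * L * (1 - τ (j+1))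
              - (c * (u - δ) * b 0 + c * L * (1 - u))
              = c * ((τ (j+1) - u) * (b 0 - L)) := by ring
          linarith [mul_nonneg hcpos.le hprod, hx.ge, hx.le]
        have h3 : c * (τ (j+1) - δ) * b 0 + c * L * (1 - τ (j+1)) ≤ J (j+1) := by
          rw [hJid j]
          have hτj1 : τ (j+1) = τ j + l := hτsucc j
          have hx : c * (L * (1 - τ (j+1)) + Γ j - (δ - l) * b 0)
              - (c * (τ (j+1) - δ) * b 0 + c * L * (1 - τ (j+1)))
              = c * (Γ j - τ j * b 0) := by rw [hτj1]; ring
          linarith [mul_nonneg hcpos.le (sub_nonneg.2 (hΓlow j)), hx.ge, hx.le]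
        linarith
      · -- Case B : full band below b m, partial band (b m, b (m+1)]
        set m := m0 - 1 with hmdef
        have hm0eq : m0 = m + 1 := hsuc
        have hm1j : m + 1 ≤ j := by omega
        have hPm1 : u - δ ≤ cdfR μ (b (m+1)) := by rw [← hm0eq]; exact hm0
        have hnot : ¬ (u - δ ≤ cdfR μ (b m)) := Nat.find_min hPex (by omega)
        push_neg at hnot
        have hFm : τ m ≤ cdfR μ (b m) := (hall m (by omega)).1
        have hWm : Gint μ (b m) ≤ Γ m + (cdfR μ (b m) - τ m) * b m := (hall m (by omega)).2
        have hΔF : 0 < cdfR μ (b (m+1)) - cdfR μ (b m) := by linarith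
        set g := c * (u - δ - cdfR μ (b m)) / (cdfR μ (b (m+1)) - cdfR μ (b m)) with hgdef
        have hg0 : 0 ≤ g :=
          div_nonneg (mul_nonneg hcpos.le (by linarith)) hΔF.le
        have hgF : g * (cdfR μ (b (m+1)) - cdfR μ (b m)) = c * (u - δ - cdfR μ (b m)) :=
          div_mul_cancel₀ _ (ne_of_gt hΔF)
        have hgc : g ≤ c := by
          rw [hgdef, div_le_iff₀ hΔF]
          nlinarith
        have hsum : c * cdfR μ (b m) + g * (cdfR μ (b (m+1)) - cdfR μ (b m))
            + c * (1 - u) = 1 := by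
          rw [hgF]; linear_combination hc1δ
        have hkey := keybound hδ0 hδ1 hL hsupp (hbmono m (m+1) (Nat.le_succ m))
          (le_trans (hbmono (m+1) j hm1j) hbv) hLv hvU hcpos.le (le_refl c)
          hg0 hgc hcpos.le (le_refl c) hsum
        have hGd : Gint μ (b (m+1)) - Gint μ (b m)
            ≤ b (m+1) * (cdfR μ (b (m+1)) - cdfR μ (b m)) :=
          Gint_diff_le hL hsupp (hbmono m (m+1) (Nat.le_succ m))
        have hgG : g * (Gint μ (b (m+1)) - Gint μ (b m))
            ≤ c * (u - δ - cdfR μ (b m)) * b (m+1) := by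
          calc g * (Gint μ (b (m+1)) - Gint μ (b m))
              ≤ g * (b (m+1) * (cdfR μ (b (m+1)) - cdfR μ (b m))) := by
                rcases eq_or_lt_of_le hg0 with h | h
                · rw [← h]; simp
                · exact mul_le_mul_of_nonneg_left hGd hg0
            _ = (g * (cdfR μ (b (m+1)) - cdfR μ (b m))) * b (m+1) := by ring
            _ = c * (u - δ - cdfR μ (b m)) * b (m+1) := by rw [hgF]
        have hcG : c * Gint μ (b m) ≤ c * (Γ m + (cdfR μ (b m) - τ m) * b m) :=
          mul_le_mul_of_nonneg_left hWm hcpos.le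
        have h1 : rcvar δ μ (omsProfit L v)
            ≤ c * (Γ m + (cdfR μ (b m) - τ m) * b m)
              + c * (u - δ - cdfR μ (b m)) * b (m+1) + c * L * (1 - u) := by
          calc rcvar δ μ (omsProfit L v)
              ≤ c * Gint μ (b m) + g * (Gint μ (b (m+1)) - Gint μ (b m))
                + c * L * (1 - u) := hkey
            _ ≤ _ := by linarith [hgG, hcG]
        have h2 : c * (Γ m + (cdfR μ (b m) - τ m) * b m)
              + c * (u - δ - cdfR μ (b m)) * b (m+1) + c * L * (1 - u)
            ≤ c * Γ m + c * (u - δ - τ m) * b (m+1) + c * L * (1 - u) := by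
          have hbm : b m ≤ b (m+1) := hbmono m (m+1) (Nat.le_succ m)
          have hprod : 0 ≤ (cdfR μ (b m) - τ m) * (b (m+1) - b m) :=
            mul_nonneg (by linarith [hFm]) (by linarith [hbm])
          have hx : c * Γ m + c * (u - δ - τ m) * b (m+1) + c * L * (1 - u)
              - (c * (Γ m + (cdfR μ (b m) - τ m) * b m)
                + c * (u - δ - cdfR μ (b m)) * b (m+1) + c * L * (1 - u))
              = c * ((cdfR μ (b m) - τ m) * (b (m+1) - b m)) := by ring
          linarith [mul_nonneg hcpos.le hprod, hx.ge, hx.le]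
        have h3 : c * Γ m + c * (u - δ - τ m) * b (m+1) + c * L * (1 - u)
            ≤ c * Γ m + c * (τ (j+1) - δ - τ m) * b (m+1) + c * L * (1 - τ (j+1)) := by
          have hprod : 0 ≤ (τ (j+1) - u) * (b (m+1) - L) :=
            mul_nonneg (by linarith) (by linarith [hbL (m+1)])
          have hx : c * Γ m + c * (τ (j+1) - δ - τ m) * b (m+1) + c * L * (1 - τ (j+1))
              - (c * Γ m + c * (u - δ - τ m) * b (m+1) + c * L * (1 - u))
              = c * ((τ (j+1) - u) * (b (m+1) - L)) := by ring
          linarith [mul_nonneg hcpos.le hprod, hx.ge, hx.le]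
        have h4 : c * Γ m + c * (τ (j+1) - δ - τ m) * b (m+1) + c * L * (1 - τ (j+1))
            ≤ J (j+1) := by
          rw [hJid j]
          have hgap := hΓgap m j (by omega)
          have hτm : τ m = δ + m * l := hτdef m
          have hτj : τ j = δ + j * l := hτdef j
          have hτj1 : τ (j+1) = τ j + l := hτsucc j
          have hb0m : b 0 ≤ b (m+1) := hbmono 0 (m+1) (Nat.zero_le _)
          have hkey2 : (τ (j+1) - δ - τ m) * b (m+1) + (δ - l) * b 0
              ≤ ((j:ℝ) - m) * l * b (m+1) := by
            have he : τ (j+1) - δ - τ m = ((j:ℝ) - m) * l + (l - δ) := by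
              rw [hτj1, hτj, hτm]; ring
            rw [he]
            have hprod : 0 ≤ (δ - l) * (b (m+1) - b 0) :=
              mul_nonneg (by linarith [hlδ]) (by linarith [hb0m])
            have hx : ((j:ℝ) - m) * l * b (m+1)
                - ((((j:ℝ) - m) * l + (l - δ)) * b (m+1) + (δ - l) * b 0)
                = (δ - l) * (b (m+1) - b 0) := by ring
            linarith [hx.ge, hx.le]
          have hy : 0 ≤ Γ j - Γ m
              - ((τ (j+1) - δ - τ m) * b (m+1) + (δ - l) * b 0) := by
            linarith [hgap, hkey2]
          have hx : c * (L * (1 - τ (j+1)) + Γ j - (δ - l) * b 0)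
              - (c * Γ m + c * (τ (j+1) - δ - τ m) * b (m+1) + c * L * (1 - τ (j+1)))
              = c * (Γ j - Γ m - ((τ (j+1) - δ - τ m) * b (m+1) + (δ - l) * b 0)) := by
            ring
          linarith [mul_nonneg hcpos.le hy, hx.ge, hx.le]
        linarith
    calc v ≤ α * rcvar δ μ (omsProfit L v) := hcon v hLv hvU
      _ ≤ α * J (j + 1) := mul_le_mul_of_nonneg_left hrc (by linarith)
  -- forcing induction
  have force : ∀ j, j + 1 ≤ n → (∀ i, i ≤ j → b i ≤ U) → ∀ i, i ≤ j →
      τ i ≤ cdfR μ (b i) ∧ Gint μ (b i) ≤ Γ i + (cdfR μ (b i) - τ i) * b i := by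
    intro j
    induction j with
    | zero =>
      intro hjn hU i hi
      have hi0 : i = 0 := Nat.le_zero.1 hi
      subst hi0
      have hb0U : b 0 ≤ U := hU 0 le_rfl
      have hLb0 : L ≤ b 0 := (hbL 0).le
      have hF0 : τ 0 ≤ cdfR μ (b 0) := by
        by_contra hcon'
        push_neg at hcon'
        rw [hτ0] at hcon'
        have hu0 : cdfR μ (b 0) < δ := hcon'
        have h1u : 0 < 1 - cdfR μ (b 0) := by linarith
        have hβc : (1 - cdfR μ (b 0))⁻¹ ≤ c := by
          rw [hcdef]
          exact inv_anti₀ h1δ (by linarith)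
        have hβ0 : 0 ≤ (1 - cdfR μ (b 0))⁻¹ := by positivity
        have hsum : 0 * cdfR μ (b 0) + 0 * (cdfR μ (b 0) - cdfR μ (b 0))
            + (1 - cdfR μ (b 0))⁻¹ * (1 - cdfR μ (b 0)) = 1 := by
          rw [inv_mul_cancel₀ (ne_of_gt h1u)]; ring
        have hkey := keybound hδ0 hδ1 hL hsupp (le_refl (b 0)) (le_refl (b 0))
          hLb0 hb0U (le_refl 0) hcpos.le (le_refl 0) hcpos.le hβ0 hβc hsum
        have hval : (0:ℝ) * Gint μ (b 0) + 0 * (Gint μ (b 0) - Gint μ (b 0))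
            + (1 - cdfR μ (b 0))⁻¹ * L * (1 - cdfR μ (b 0)) = L := by
          have : (1 - cdfR μ (b 0))⁻¹ * L * (1 - cdfR μ (b 0))
              = ((1 - cdfR μ (b 0))⁻¹ * (1 - cdfR μ (b 0))) * L := by ring
          rw [this, inv_mul_cancel₀ (ne_of_gt h1u)]; ring
        rw [hval] at hkey
        have hcb0 := hcon (b 0) hLb0 hb0U
        have : α * rcvar δ μ (omsProfit L (b 0)) ≤ α * L :=
          mul_le_mul_of_nonneg_left hkey (by linarith)
        have hb0v : b 0 = α * L + ε := by rw [hbdef, hJ0]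
        linarith
      refine ⟨hF0, ?_⟩
      rw [hΓ0, hτ0]
      have hG := Gint_le hL hsupp (b 0)
      have hx : δ * b 0 + (cdfR μ (b 0) - δ) * b 0 = b 0 * cdfR μ (b 0) := by ring
      linarith
    | succ j ih =>
      intro hjn hU i hi
      have hprev := ih (by omega) (fun i' hi' => hU i' (by omega))
      rcases Nat.lt_succ_iff_lt_or_eq.1 (Nat.lt_succ_of_le hi) with h | h
      · exact hprev i (Nat.lt_succ_iff.1 h)
      · subst h
        have hbm : b j ≤ b (j+1) := hbmono j (j+1) (Nat.le_succ j)
        have hFj := (hprev j le_rfl).1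
        have hWj := (hprev j le_rfl).2
        have hFmono : cdfR μ (b j) ≤ cdfR μ (b (j+1)) := cdfR_mono hbm
        have hF1 : τ (j+1) ≤ cdfR μ (b (j+1)) := by
          by_contra hcon2
          push_neg at hcon2
          have hst := step j (b (j+1)) (by omega) hprev hbm (hU (j+1) le_rfl) hcon2.le
          have hb1v : b (j+1) = α * J (j+1) + ε := hbdef (j+1)
          linarith
        refine ⟨hF1, ?_⟩
        have hd := Gint_diff_le hL hsupp hbm
        rw [hΓsucc, hτsucc]
        have hprod : 0 ≤ (cdfR μ (b j) - τ j) * (b (j+1) - b j) :=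
          mul_nonneg (by linarith) (by linarith)
        have hx : Γ j + l * b (j+1) + (cdfR μ (b (j+1)) - (τ j + l)) * b (j+1)
            - (Γ j + (cdfR μ (b j) - τ j) * b j
              + b (j+1) * (cdfR μ (b (j+1)) - cdfR μ (b j)))
            = (cdfR μ (b j) - τ j) * (b (j+1) - b j) := by ring
        linarith [hx.ge, hx.le]
  -- conclusion : U ≤ α * J n + ε
  have hUf : U ≤ α * J n + ε := by
    by_cases hcase : ∀ i, i ≤ n - 1 → b i ≤ U
    · have hn2 : n - 1 + 1 = n := by omega
      have hall := force (n-1) (by omega) hcase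
      have hFU : cdfR μ U ≤ τ (n - 1 + 1) := by
        rw [hn2, hτn]; exact cdfR_le_one U
      have hst := step (n-1) U (by omega) hall (hcase (n-1) le_rfl) le_rfl hFU
      rw [hn2] at hst
      linarith
    · push_neg at hcase
      obtain ⟨i, hi, hUlt⟩ := hcase
      have h1 : b i ≤ b n := hbmono i n (by omega)
      have h2 : b n = α * J n + ε := hbdef n
      linarith
  -- closed form for J
  have hα0 : (0:ℝ) < α := by linarith
  have hJform : ∀ j, J j = (1 + α / n) ^ j * (L - (L - ε) / α) + (L - ε) / α := by
    intro j; induction j with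
    | zero => rw [hJ0, pow_zero]; ring
    | succ j ihf =>
      rw [hJsucc, ihf, pow_succ]
      have hαn : (α : ℝ) ≠ 0 := ne_of_gt hα0
      have hnn : (n : ℝ) ≠ 0 := ne_of_gt hn0
      field_simp
      ring
  have hQpos : 0 < (1 + α / n) ^ n := by positivity
  have hfin : α * J n + ε = ((α - 1) * L + ε) * (1 + α / n) ^ n + L := by
    rw [hJform n]
    have hαn : (α : ℝ) ≠ 0 := ne_of_gt hα0
    field_simp
    ring
  linarith

end core


/-- Theorem 9: lower bound for one-max search. With `n = max{1, ⌈1/δ⌉ - 1}` and `r` the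
unique positive root of `(r-1)(1+r/n)^n = θ-1`, every random threshold algorithm has
`δ`-CVaR competitive ratio at least `r`; hence `α_δ^{θ,*} ≥ r`, and `α_δ^{θ,*} ≥ √θ`
whenever `δ ≥ 1/2`. -/
theorem oms_lower_bound (δ : ℝ) (hδ : δ ∈ Ioo (0:ℝ) 1) (L U : ℝ) (hL : 0 < L)
    (hLU : L ≤ U) (θ : ℝ) (hθ : θ = U / L)
    (n : ℕ) (hn : n = max 1 (⌈1/δ⌉₊ - 1))
    (r : ℝ) (hr : 0 < r) (hroot : (r - 1) * (1 + r / n) ^ n = θ - 1) :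
    (∀ μ : Measure ℝ, IsProbabilityMeasure μ → μ (Icc L U)ᶜ = 0 →
        r ≤ omsCR δ L U μ) ∧
    r ≤ omsOpt δ L U ∧
    (1 / 2 ≤ δ → Real.sqrt θ ≤ omsOpt δ L U) := by
  obtain ⟨hδ0, hδ1⟩ := hδ
  have h1δ : (0:ℝ) < 1 - δ := by linarith
  have hceil2 : 2 ≤ ⌈1/δ⌉₊ := by
    have h11 : (1:ℝ) < 1/δ := by rw [lt_div_iff₀ hδ0]; linarith
    have := Nat.lt_ceil.2 (show ((1:ℕ):ℝ) < 1/δ by exact_mod_cast h11)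
    omega
  have hn_eq : n = ⌈1/δ⌉₊ - 1 := by rw [hn]; omega
  have hn1 : 1 ≤ n := by rw [hn]; exact le_max_left _ _
  have hn0 : (0:ℝ) < n := by exact_mod_cast hn1
  have hnceil : (n:ℝ) + 1 = (⌈1/δ⌉₊ : ℝ) := by
    have : n + 1 = ⌈1/δ⌉₊ := by omega
    exact_mod_cast this
  have hnδ : 1 ≤ ((n:ℝ) + 1) * δ := by
    have hceil : (1/δ : ℝ) ≤ (⌈1/δ⌉₊ : ℝ) := Nat.le_ceil _
    rw [hnceil]
    exact (div_le_iff₀ hδ0).1 hceil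
  have hQr : (0:ℝ) < (1 + r / n) ^ n := by positivity
  have hθ1 : 1 ≤ θ := by rw [hθ]; exact (one_le_div hL).2 hLU
  -- Part 1
  have part1 : ∀ μ : Measure ℝ, IsProbabilityMeasure μ → μ (Icc L U)ᶜ = 0 →
      r ≤ omsCR δ L U μ := by
    intro μ hprob hsupp
    haveI := hprob
    have hLIcc : L ∈ Icc L U := ⟨le_rfl, hLU⟩
    have hbdd : BddAbove (range fun v : Icc L U => omsRatio δ L μ (v : ℝ)) := by
      refine ⟨U / L, ?_⟩
      rintro y ⟨⟨v, hv⟩, rfl⟩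
      show omsRatio δ L μ v ≤ U / L
      unfold omsRatio
      have h1 : L ≤ rcvar δ μ (fun x => omsProfit L v x) :=
        rcvar_ge_L hδ0 hδ1 hL hsupp hv.1 hv.2
      exact div_le_div₀ (le_trans hL.le hLU) hv.2 hL h1
    have hratioL : omsRatio δ L μ L = 1 := by
      unfold omsRatio
      have h1 : L ≤ rcvar δ μ (fun x => omsProfit L L x) :=
        rcvar_ge_L hδ0 hδ1 hL hsupp le_rfl hLU
      have h2 : rcvar δ μ (fun x => omsProfit L L x) ≤ L :=
        rcvar_le_v hδ0 hδ1 hL hsupp le_rfl hLU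
      rw [le_antisymm h2 h1]
      exact div_self (ne_of_gt hL)
    have hα1 : 1 ≤ omsCR δ L U μ := by
      rw [← hratioL]
      exact le_ciSup hbdd ⟨L, hLIcc⟩
    by_contra hcon
    push_neg at hcon
    set α := omsCR δ L U μ with hαdef
    have hr1 : 1 < r := lt_of_le_of_lt hα1 hcon
    have hcons : ∀ v, L ≤ v → v ≤ U → v ≤ α * rcvar δ μ (omsProfit L v) := by
      intro v hv1 hv2
      have hratio : omsRatio δ L μ v ≤ α := le_ciSup hbdd ⟨v, hv1, hv2⟩
      have hrcge : L ≤ rcvar δ μ (fun x => omsProfit L v x) :=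
        rcvar_ge_L hδ0 hδ1 hL hsupp hv1 hv2
      have hrc : 0 < rcvar δ μ (fun x => omsProfit L v x) := lt_of_lt_of_le hL hrcge
      unfold omsRatio at hratio
      rw [div_le_iff₀ hrc] at hratio
      exact hratio
    have hQα : (0:ℝ) < (1 + α / n) ^ n := by
      have : (0:ℝ) < 1 + α / n := by
        have : (0:ℝ) ≤ α / n := by positivity
        linarith
      positivity
    have hbound : U - L ≤ (α - 1) * L * ((1 + α / n) ^ n) := by
      refine le_of_forall_pos_le_add ?_
      intro η hη
      have hε : 0 < η / (1 + α / n) ^ n := by positivity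
      have hmb := main_bound hδ0 hδ1 hL hLU hsupp hn1 hnδ hα1 hε hcons
      calc U - L ≤ ((α - 1) * L + η / (1 + α / n) ^ n) * (1 + α / n) ^ n := hmb
        _ = (α - 1) * L * (1 + α / n) ^ n + η := by field_simp
    have hθL : U - L = (θ - 1) * L := by rw [hθ]; field_simp
    have hstep1 : θ - 1 ≤ (α - 1) * (1 + α / n) ^ n := by
      rw [hθL] at hbound
      have hx : (α - 1) * L * (1 + α / n) ^ n
          = ((α - 1) * (1 + α / n) ^ n) * L := by ring
      rw [hx] at hbound
      exact le_of_mul_le_mul_right hbound hL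
    have hstep2 : (α - 1) * (1 + α / n) ^ n < (r - 1) * (1 + r / n) ^ n := by
      have h1 : (1 + α / n) ^ n ≤ (1 + r / n) ^ n := by
        refine pow_le_pow_left₀ ?_ ?_ n
        · have : (0:ℝ) ≤ α / n := by positivity
          linarith
        · have : α / n ≤ r / n := by gcongr
          linarith [this]
      calc (α - 1) * (1 + α / n) ^ n ≤ (α - 1) * (1 + r / n) ^ n :=
            mul_le_mul_of_nonneg_left h1 (by linarith)
        _ < (r - 1) * (1 + r / n) ^ n :=
            mul_lt_mul_of_pos_right (by linarith) hQr
    rw [hroot] at hstep2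
    linarith
  refine ⟨part1, ?_, ?_⟩
  · -- Part 2
    have hne : Nonempty {m : Measure ℝ // IsProbabilityMeasure m ∧ m (Icc L U)ᶜ = 0} := by
      refine ⟨⟨Measure.dirac L, ?_, ?_⟩⟩
      · infer_instance
      · rw [Measure.dirac_apply' _ measurableSet_Icc.compl]
        apply Set.indicator_of_notMem
        simp [hLU]
    unfold omsOpt
    exact le_ciInf fun m => part1 m.1 m.2.1 m.2.2
  · -- Part 3
    intro hhalf
    have hceil_eq : ⌈1/δ⌉₊ = 2 := by
      have h2 : (1:ℝ)/δ ≤ 2 := by rw [div_le_iff₀ hδ0]; linarith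
      have hle : ⌈1/δ⌉₊ ≤ 2 := Nat.ceil_le.2 (by exact_mod_cast h2)
      omega
    have hn1' : n = 1 := by rw [hn, hceil_eq]; decide
    have hrθ : r ^ 2 = θ := by
      have hh := hroot
      rw [hn1'] at hh
      push_cast at hh
      nlinarith [hh]
    have hsq : Real.sqrt θ = r := by rw [← hrθ, Real.sqrt_sq hr.le]
    rw [hsq]
    -- part 2 again
    have hne : Nonempty {m : Measure ℝ // IsProbabilityMeasure m ∧ m (Icc L U)ᶜ = 0} := by
      refine ⟨⟨Measure.dirac L, ?_, ?_⟩⟩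
      · infer_instance
      · rw [Measure.dirac_apply' _ measurableSet_Icc.compl]
        apply Set.indicator_of_notMem
        simp [hLU]
    unfold omsOpt
    exact le_ciInf fun m => part1 m.1 m.2.1 m.2.2
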